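/- arXiv:2412.05344 — 10 statements merged into one kernel-verified Lean document; each statement's English description precedes it below -/
import Mathlib

section
/- Let X be a finite set and p : X × X × 𝒳 × 𝒳 → ℝ (where 𝒳 is the set of nonempty subsets of X) with Möbius inverse q defined by q(x,y,A,B) = Σ_{A ⊆ A'} Σ_{B ⊆ B'} (-1)^{|A'\A|+|B'\B|} p(x,y,A',B'). If q(x,y,A,B) ≥ 0 for all (x,y) ∈ A × B, then p satisfies regularity: whenever A ⊆ A' and B ⊆ B' and (x,y) ∈ A × B, we have p(x,y,A,B) ≥ p(x,y,A',B'). -/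
open Finset


lemma neg_one_pow_sub_real (a b : ℕ) (h : b ≤ a) : (-1:ℝ)^(a-b) = (-1)^a * (-1)^b := by
  have h1 : ((-1:ℝ)^b) * ((-1:ℝ)^b) = 1 := by
    rw [← pow_add]
    exact Even.neg_one_pow ⟨b, rfl⟩
  calc (-1:ℝ)^(a-b) = (-1:ℝ)^(a-b) * (((-1:ℝ)^b) * ((-1:ℝ)^b)) := by rw [h1, mul_one]
    _ = ((-1:ℝ)^(a-b) * (-1:ℝ)^b) * (-1:ℝ)^b := by ring
    _ = (-1:ℝ)^a * (-1)^b := by rw [← pow_add, Nat.sub_add_cancel h]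

lemma aux_sign {X : Type*} [Fintype X] [DecidableEq X] (A C' : Finset X) :
    (∑ C : Finset X, (if A ⊆ C ∧ C ⊆ C' then (-1:ℝ)^((C' \ C).card) else 0))
      = if C' = A then 1 else 0 := by
  by_cases hA : A ⊆ C'
  · rw [← Finset.sum_filter]
    have hbij := Finset.sum_nbij' (i := fun C => C \ A) (j := fun D => A ∪ D)
      (s := Finset.univ.filter (fun C => A ⊆ C ∧ C ⊆ C'))
      (t := (C' \ A).powerset)
      (f := fun C => (-1:ℝ)^((C' \ C).card))
      (g := fun D => (-1:ℝ)^(((C' \ A) \ D).card))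
      (fun C hC => by
        simp only [mem_filter, mem_univ, true_and] at hC
        exact Finset.mem_powerset.2 (sdiff_subset_sdiff hC.2 le_rfl))
      (fun D hD => by
        simp only [Finset.mem_powerset] at hD
        simp only [mem_filter, mem_univ, true_and]
        exact ⟨Finset.subset_union_left, Finset.union_subset hA (hD.trans Finset.sdiff_subset)⟩)
      (fun C hC => by
        simp only [mem_filter, mem_univ, true_and] at hC
        exact Finset.union_sdiff_of_subset hC.1)
      (fun D hD => by
        simp only [Finset.mem_powerset] at hD
        have hdisj : Disjoint A D := Finset.disjoint_left.2
          (fun a ha hb => absurd ha (Finset.mem_sdiff.1 (hD hb)).2)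
        exact Finset.union_sdiff_cancel_left hdisj)
      (fun C hC => by
        simp only [mem_filter, mem_univ, true_and] at hC
        rw [sdiff_sdiff_sdiff_cancel_right hC.1])
    rw [hbij]
    have h2 : ∀ D ∈ (C' \ A).powerset, ((-1:ℝ))^(((C' \ A) \ D).card)
        = (-1:ℝ)^((C' \ A).card) * (-1:ℝ)^D.card := by
      intro D hD
      rw [Finset.mem_powerset] at hD
      rw [Finset.card_sdiff_of_subset hD, neg_one_pow_sub_real _ _ (Finset.card_le_card hD)]
    rw [Finset.sum_congr rfl h2, ← Finset.mul_sum]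
    have hZ := Finset.sum_powerset_neg_one_pow_card (x := C' \ A)
    have hr : (∑ D ∈ (C' \ A).powerset, (-1:ℝ)^D.card) = if C' \ A = ∅ then 1 else 0 := by
      have hc : (∑ D ∈ (C' \ A).powerset, (-1:ℝ)^D.card)
          = ((∑ m ∈ (C' \ A).powerset, (-1:ℤ)^m.card : ℤ) : ℝ) := by
        push_cast
        rfl
      rw [hc, hZ]
      split <;> simp
    rw [hr]
    by_cases h : C' = A
    · simp [h, sdiff_eq_empty_iff_subset.2 (le_of_eq h)]
    · have hne : ¬ (C' \ A = ∅) := by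
        intro he
        exact h (Finset.Subset.antisymm (sdiff_eq_empty_iff_subset.1 he) hA)
      simp [hne, h]
  · rw [if_neg (fun h => hA (le_of_eq h.symm))]
    apply Finset.sum_eq_zero
    intro C _
    rw [if_neg (fun h => hA (h.1.trans h.2))]

lemma inv1 {X : Type*} [Fintype X] [DecidableEq X] (f : Finset X → ℝ) (A : Finset X) :
    ∑ C ∈ Finset.univ.filter (fun C => A ⊆ C),
      ∑ C' ∈ Finset.univ.filter (fun C' => C ⊆ C'), (-1:ℝ)^((C' \ C).card) * f C' = f A := by
  have step : (∑ C ∈ Finset.univ.filter (fun C => A ⊆ C),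
      ∑ C' ∈ Finset.univ.filter (fun C' => C ⊆ C'), (-1:ℝ)^((C' \ C).card) * f C')
      = ∑ C : Finset X, ∑ C' : Finset X,
        (if A ⊆ C ∧ C ⊆ C' then (-1:ℝ)^((C' \ C).card) else 0) * f C' := by
    rw [Finset.sum_filter]
    apply Finset.sum_congr rfl
    intro C _
    by_cases h : A ⊆ C
    · rw [if_pos h, Finset.sum_filter]
      apply Finset.sum_congr rfl
      intro C' _
      by_cases h2 : C ⊆ C' <;> simp [h, h2]
    · rw [if_neg h]
      symm
      apply Finset.sum_eq_zero
      intro C' _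
      simp [h]
  rw [step, Finset.sum_comm]
  have h3 : ∀ C' : Finset X,
      (∑ C : Finset X, (if A ⊆ C ∧ C ⊆ C' then (-1:ℝ)^((C' \ C).card) else 0) * f C')
        = (if C' = A then 1 else 0) * f C' := by
    intro C'
    rw [← Finset.sum_mul, aux_sign]
  rw [Finset.sum_congr rfl (fun C' _ => h3 C')]
  simp

/-- The Möbius inverse of `p` in the two menu coordinates. -/
noncomputable def mob2 {X : Type*} [Fintype X] [DecidableEq X]
    (p : X → X → Finset X → Finset X → ℝ) (x y : X) (A B : Finset X) : ℝ :=
  ∑ A' ∈ Finset.univ.filter (fun A' => A ⊆ A'),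
    ∑ B' ∈ Finset.univ.filter (fun B' => B ⊆ B'),
      (-1 : ℝ) ^ ((A' \ A).card + (B' \ B).card) * p x y A' B'

lemma inv2 {X : Type*} [Fintype X] [DecidableEq X]
    (p : X → X → Finset X → Finset X → ℝ) (x y : X) (A B : Finset X) :
    (∑ C ∈ Finset.univ.filter (fun C => A ⊆ C),
      ∑ D ∈ Finset.univ.filter (fun D => B ⊆ D), mob2 p x y C D) = p x y A B := by
  have hm : ∀ C D : Finset X, mob2 p x y C D
      = ∑ C' ∈ Finset.univ.filter (fun C' => C ⊆ C'), (-1:ℝ)^((C' \ C).card) *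
          ∑ D' ∈ Finset.univ.filter (fun D' => D ⊆ D'), (-1:ℝ)^((D' \ D).card) * p x y C' D' := by
    intro C D
    unfold mob2
    apply Finset.sum_congr rfl
    intro C' _
    rw [Finset.mul_sum]
    apply Finset.sum_congr rfl
    intro D' _
    rw [pow_add]
    ring
  have h1 : ∀ C : Finset X, ∑ D ∈ Finset.univ.filter (fun D => B ⊆ D), mob2 p x y C D
      = ∑ C' ∈ Finset.univ.filter (fun C' => C ⊆ C'), (-1:ℝ)^((C' \ C).card) * p x y C' B := by
    intro C
    rw [Finset.sum_congr rfl (fun D _ => hm C D), Finset.sum_comm]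
    apply Finset.sum_congr rfl
    intro C' _
    rw [← Finset.mul_sum]
    congr 1
    exact inv1 (fun D' => p x y C' D') B
  rw [Finset.sum_congr rfl (fun C _ => h1 C)]
  exact inv1 (fun C' => p x y C' B) A

/-- If the Möbius inverse `q` of `p` is nonnegative (complete monotonicity), then `p`
satisfies regularity: `p(x,y,A,B) ≥ p(x,y,A',B')` whenever `A ⊆ A'`, `B ⊆ B'`. -/
theorem stmt1 {X : Type*} [Fintype X] [DecidableEq X]
    (p : X → X → Finset X → Finset X → ℝ)
    (hq : ∀ (A B : Finset X), ∀ x ∈ A, ∀ y ∈ B, 0 ≤ mob2 p x y A B) :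
    ∀ (A A' B B' : Finset X), A ⊆ A' → B ⊆ B' → ∀ x ∈ A, ∀ y ∈ B,
      p x y A' B' ≤ p x y A B := by
  intro A A' B B' hA hB x hx y hy
  rw [← inv2 p x y A B, ← inv2 p x y A' B']
  calc (∑ C ∈ Finset.univ.filter (fun C => A' ⊆ C),
        ∑ D ∈ Finset.univ.filter (fun D => B' ⊆ D), mob2 p x y C D)
      ≤ ∑ C ∈ Finset.univ.filter (fun C => A' ⊆ C),
        ∑ D ∈ Finset.univ.filter (fun D => B ⊆ D), mob2 p x y C D := by
        apply Finset.sum_le_sum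
        intro C hC
        simp only [Finset.mem_filter, Finset.mem_univ, true_and] at hC
        apply Finset.sum_le_sum_of_subset_of_nonneg
        · intro D hD
          simp only [Finset.mem_filter, Finset.mem_univ, true_and] at hD ⊢
          exact hB.trans hD
        · intro D hD _
          simp only [Finset.mem_filter, Finset.mem_univ, true_and] at hD
          exact hq C D x (hA.trans hC hx) y (hD hy)
    _ ≤ ∑ C ∈ Finset.univ.filter (fun C => A ⊆ C),
        ∑ D ∈ Finset.univ.filter (fun D => B ⊆ D), mob2 p x y C D := by
        apply Finset.sum_le_sum_of_subset_of_nonneg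
        · intro C hC
          simp only [Finset.mem_filter, Finset.mem_univ, true_and] at hC ⊢
          exact hA.trans hC
        · intro C hC _
          simp only [Finset.mem_filter, Finset.mem_univ, true_and] at hC
          apply Finset.sum_nonneg
          intro D hD
          simp only [Finset.mem_filter, Finset.mem_univ, true_and] at hD
          exact hq C D x (hC hx) y (hD hy)
end

section
/- A random joint choice rule p satisfies marginality (for all A, B, C and all x ∈ A, Σ_{y∈B} p(x,y,A,B) = Σ_{y∈C} p(x,y,A,C)) if and only if its Möbius inverse q satisfies: for every nonempty A ⊆ X, every proper nonempty subset B ⊊ X, and every x ∈ A, Σ_{y∈B} q(x,y,A,B) = Σ_{z∉B} q(x,z,A,B∪{z}). -/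
open Finset

section StmtHelpers

set_option linter.unusedSectionVars false in
private lemma powerset_sign' {X : Type*} [DecidableEq X] (s : Finset X) :
    ∑ T ∈ s.powerset, (-1:ℝ) ^ T.card = if s = ∅ then 1 else 0 := by
  have h := Finset.sum_powerset_neg_one_pow_card (x := s)
  have : ((∑ m ∈ s.powerset, (-1 : ℤ) ^ m.card : ℤ) : ℝ)
      = ∑ T ∈ s.powerset, (-1:ℝ) ^ T.card := by push_cast; ring
  rw [← this, h]
  split <;> norm_num

private lemma sign_sum_sup' {X : Type*} [Fintype X] [DecidableEq X] (B : Finset X) :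
    ∑ B' ∈ univ.filter (fun B' => B ⊆ B'), (-1:ℝ) ^ ((B' \ B).card) =
      if B = univ then 1 else 0 := by
  have h : ∑ B' ∈ univ.filter (fun B' => B ⊆ B'), (-1:ℝ) ^ ((B' \ B).card)
      = ∑ T ∈ Bᶜ.powerset, (-1:ℝ) ^ T.card := by
    refine sum_nbij' (fun B' => B' \ B) (fun T => T ∪ B) ?_ ?_ ?_ ?_ ?_
    · intro a ha
      simp only [mem_filter, mem_univ, true_and] at ha
      simp only [mem_powerset]
      intro t ht
      simp only [mem_sdiff] at ht
      simp [ht.2]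
    · intro T hT
      simp [subset_union_right]
    · intro a ha
      simp only [mem_filter, mem_univ, true_and] at ha
      exact sdiff_union_of_subset ha
    · intro T hT
      simp only [mem_powerset] at hT
      apply union_sdiff_cancel_right
      rw [disjoint_iff_inter_eq_empty, ← subset_empty]
      intro t ht
      simp only [mem_inter] at ht
      have := hT ht.1
      simp only [mem_compl] at this
      exact absurd ht.2 this
    · intro a ha; rfl
  rw [h, powerset_sign']
  congr 1
  simp [compl_eq_empty_iff]

private lemma sign_sum_Icc' {X : Type*} [Fintype X] [DecidableEq X]
    (B C : Finset X) (hBC : B ⊆ C) :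
    ∑ B' ∈ (univ.filter (fun B' => B ⊆ B')).filter (fun B' => B' ⊆ C),
      (-1:ℝ) ^ ((C \ B').card) = if C = B then 1 else 0 := by
  have h : ∑ B' ∈ (univ.filter (fun B' => B ⊆ B')).filter (fun B' => B' ⊆ C),
      (-1:ℝ) ^ ((C \ B').card) = ∑ T ∈ (C \ B).powerset, (-1:ℝ) ^ T.card := by
    refine sum_nbij' (fun B' => C \ B') (fun T => C \ T) ?_ ?_ ?_ ?_ ?_
    · intro a ha
      simp only [mem_filter, mem_univ, true_and] at ha
      simp only [mem_powerset]
      exact sdiff_subset_sdiff Subset.rfl ha.1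
    · intro T hT
      simp only [mem_powerset] at hT
      simp only [mem_filter, mem_univ, true_and]
      constructor
      · intro t ht
        simp only [mem_sdiff]
        refine ⟨hBC ht, fun h => ?_⟩
        exact (mem_sdiff.1 (hT h)).2 ht
      · exact sdiff_subset
    · intro a ha
      simp only [mem_filter, mem_univ, true_and] at ha
      exact Finset.sdiff_sdiff_eq_self ha.2
    · intro T hT
      simp only [mem_powerset] at hT
      exact Finset.sdiff_sdiff_eq_self (hT.trans sdiff_subset)
    · intro a ha; rfl
  rw [h, powerset_sign']
  congr 1
  rw [eq_iff_iff]
  constructor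
  · intro h; exact Subset.antisymm (by rwa [← sdiff_eq_empty_iff_subset]) hBC
  · intro h; subst h; simp

private lemma mob_inv' {X : Type*} [Fintype X] [DecidableEq X]
    (g : Finset X → ℝ) (B : Finset X) :
    ∑ B' ∈ univ.filter (fun B' => B ⊆ B'),
      ∑ B'' ∈ univ.filter (fun B'' => B' ⊆ B''), (-1:ℝ) ^ ((B'' \ B').card) * g B''
      = g B := by
  rw [Finset.sum_comm' (t' := univ.filter (fun B'' => B ⊆ B''))
      (s' := fun B'' => (univ.filter (fun B' => B ⊆ B')).filter (fun B' => B' ⊆ B''))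
      (by intro B' B''; simp only [mem_filter, mem_univ, true_and]
          constructor
          · rintro ⟨h1, h2⟩; exact ⟨⟨h1, h2⟩, h1.trans h2⟩
          · rintro ⟨⟨h1, h2⟩, _⟩; exact ⟨h1, h2⟩)]
  rw [Finset.sum_eq_single B]
  · have : (univ.filter (fun B' => B ⊆ B')).filter (fun B' => B' ⊆ B) = {B} := by
      ext B'; simp [Subset.antisymm_iff, and_comm]
    rw [this, sum_singleton]; simp
  · intro C hC hne
    simp only [mem_filter, mem_univ, true_and] at hC
    rw [← sum_mul, sign_sum_Icc' B C hC, if_neg hne, zero_mul]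
  · intro h
    exact absurd (by simp : B ∈ univ.filter (fun B' => B ⊆ B')) h

/-- the marginal of the Möbius inverse of `p` in the first menu coordinate only -/
private noncomputable def Fm {X : Type*} [Fintype X] [DecidableEq X]
    (p : X → X → Finset X → Finset X → ℝ) (x : X) (A B' : Finset X) : ℝ :=
  ∑ A' ∈ univ.filter (fun A' => A ⊆ A'),
    (-1:ℝ) ^ ((A' \ A).card) * ∑ y ∈ B', p x y A' B'

private lemma key' {X : Type*} [Fintype X] [DecidableEq X]
    (p : X → X → Finset X → Finset X → ℝ) (x : X) (A B : Finset X) :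
    ∑ y ∈ B, mob2 p x y A B - ∑ z ∈ Bᶜ, mob2 p x z A (insert z B)
      = ∑ B' ∈ univ.filter (fun B' => B ⊆ B'), (-1:ℝ) ^ ((B' \ B).card) * Fm p x A B' := by
  set r : X → Finset X → ℝ := fun y B' =>
    ∑ A' ∈ univ.filter (fun A' => A ⊆ A'), (-1:ℝ) ^ ((A' \ A).card) * p x y A' B' with hr
  have hm : ∀ (y : X) (B0 : Finset X), mob2 p x y A B0
      = ∑ B' ∈ univ.filter (fun B' => B0 ⊆ B'), (-1:ℝ) ^ ((B' \ B0).card) * r y B' := by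
    intro y B0
    rw [mob2, Finset.sum_comm]
    refine sum_congr rfl fun B' _ => ?_
    rw [hr]
    simp only
    rw [mul_sum]
    refine sum_congr rfl fun A' _ => ?_
    rw [pow_add]; ring
  have hS : ∑ y ∈ B, mob2 p x y A B
      = ∑ B' ∈ univ.filter (fun B' => B ⊆ B'), (-1:ℝ) ^ ((B' \ B).card) * ∑ y ∈ B, r y B' := by
    simp only [hm]
    rw [Finset.sum_comm]
    exact sum_congr rfl fun B' _ => by rw [mul_sum]
  have hT : ∑ z ∈ Bᶜ, mob2 p x z A (insert z B)
      = - ∑ B' ∈ univ.filter (fun B' => B ⊆ B'),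
          (-1:ℝ) ^ ((B' \ B).card) * ∑ z ∈ B' \ B, r z B' := by
    simp only [hm]
    rw [Finset.sum_comm' (t' := univ.filter (fun B' => B ⊆ B')) (s' := fun B' => B' \ B)
      (by intro z B'
          simp only [mem_compl, mem_filter, mem_univ, true_and, mem_sdiff, insert_subset_iff]
          tauto)]
    rw [← sum_neg_distrib]
    refine sum_congr rfl fun B' hB' => ?_
    simp only [mem_filter, mem_univ, true_and] at hB'
    rw [← neg_mul, mul_sum]
    refine sum_congr rfl fun z hz => ?_
    simp only [mem_sdiff] at hz
    have hdiff : B' \ insert z B = (B' \ B).erase z := by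
      ext t; simp only [mem_sdiff, mem_insert, mem_erase]; tauto
    have hcard : (B' \ insert z B).card = (B' \ B).card - 1 := by
      rw [hdiff, card_erase_of_mem (by simp [mem_sdiff, hz.1, hz.2])]
    have hpos : 1 ≤ (B' \ B).card := card_pos.2 ⟨z, by simp [mem_sdiff, hz.1, hz.2]⟩
    have hsign : (-1:ℝ) ^ ((B' \ insert z B).card) = -(-1:ℝ) ^ ((B' \ B).card) := by
      rw [hcard]
      conv_rhs => rw [show (B' \ B).card = ((B' \ B).card - 1) + 1 from by omega, pow_succ]
      ring
    rw [hsign]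
  rw [hS, hT, sub_neg_eq_add, ← Finset.sum_add_distrib]
  refine sum_congr rfl fun B' hB' => ?_
  simp only [mem_filter, mem_univ, true_and] at hB'
  rw [← mul_add, Fm]
  congr 1
  rw [add_comm, Finset.sum_sdiff hB', hr]
  simp only
  rw [Finset.sum_comm]
  exact sum_congr rfl fun A' _ => by rw [mul_sum]

end StmtHelpers

/-- A random joint choice rule satisfies marginality iff its Möbius inverse satisfies the
recursion `Σ_{y∈B} q(x,y,A,B) = Σ_{z∉B} q(x,z,A,B∪{z})` for proper nonempty `B ⊊ X`. -/
theorem stmt3 {X : Type*} [Fintype X] [DecidableEq X]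
    (p : X → X → Finset X → Finset X → ℝ)
    (hnn : ∀ (A B : Finset X), ∀ x ∈ A, ∀ y ∈ B, 0 ≤ p x y A B)
    (hsum : ∀ (A B : Finset X), A.Nonempty → B.Nonempty →
      ∑ x ∈ A, ∑ y ∈ B, p x y A B = 1) :
    (∀ (A B C : Finset X), B.Nonempty → C.Nonempty → ∀ x ∈ A,
        ∑ y ∈ B, p x y A B = ∑ y ∈ C, p x y A C) ↔
    (∀ (A B : Finset X), A.Nonempty → B.Nonempty → B ≠ Finset.univ → ∀ x ∈ A,
        ∑ y ∈ B, mob2 p x y A B = ∑ z ∈ Bᶜ, mob2 p x z A (insert z B)) := by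
  constructor
  · intro hmarg A B hA hB hBu x hx
    rw [← sub_eq_zero, key' p x A B]
    have hconst : ∀ B' ∈ univ.filter (fun B' => B ⊆ B'), Fm p x A B' = Fm p x A univ := by
      intro B' hB'
      simp only [mem_filter, mem_univ, true_and] at hB'
      unfold Fm
      refine sum_congr rfl fun A' hA' => ?_
      simp only [mem_filter, mem_univ, true_and] at hA'
      congr 1
      exact hmarg A' B' univ (hB.mono hB') (hB.mono (subset_univ B)) x (hA' hx)
    rw [sum_congr rfl (fun B' hB' => by rw [hconst B' hB'])]
    rw [← sum_mul, sign_sum_sup', if_neg hBu, zero_mul]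
  · intro hrec A B C hB hC x hx
    have hF : ∀ A0 : Finset X, x ∈ A0 → ∀ B0 : Finset X, B0.Nonempty →
        Fm p x A0 B0 = Fm p x A0 univ := by
      intro A0 hx0 B0 hB0
      have hinv := mob_inv' (Fm p x A0) B0
      rw [← hinv, Finset.sum_eq_single univ]
      · have huniv : (univ.filter (fun B'' => (univ : Finset X) ⊆ B'')) = {univ} := by
          ext D; simp [univ_subset_iff, eq_comm]
        rw [huniv, sum_singleton]; simp
      · intro B' hB' hne
        simp only [mem_filter, mem_univ, true_and] at hB'
        have hz : ∑ y ∈ B', mob2 p x y A0 B' = ∑ z ∈ B'ᶜ, mob2 p x z A0 (insert z B') :=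
          hrec A0 B' ⟨x, hx0⟩ (hB0.mono hB') hne x hx0
        have h0 := key' p x A0 B'
        rw [hz, sub_self] at h0
        exact h0.symm
      · intro habs
        exact absurd (by simp : (univ : Finset X) ∈ univ.filter (fun B' => B0 ⊆ B')) habs
    have hinvA : ∀ B1 : Finset X,
        ∑ A' ∈ univ.filter (fun A' => A ⊆ A'), Fm p x A' B1 = ∑ y ∈ B1, p x y A B1 := by
      intro B1
      have := mob_inv' (fun A0 => ∑ y ∈ B1, p x y A0 B1) A
      rw [← this]
      rfl
    have hf : ∀ B0 : Finset X, B0.Nonempty →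
        ∑ y ∈ B0, p x y A B0 = ∑ y ∈ (univ : Finset X), p x y A univ := by
      intro B0 hB0
      rw [← hinvA B0, ← hinvA univ]
      refine sum_congr rfl fun A' hA' => ?_
      simp only [mem_filter, mem_univ, true_and] at hA'
      exact hF A' (hA' hx) B0 hB0
    rw [hf B hB, hf C hC]
end

section
/- If a random joint choice rule p is consistent with CDRUM, then its Möbius inverse is nonnegative: q(x,y,A,B) ≥ 0 for all A, B ⊆ X and (x,y) ∈ A × B (complete monotonicity). -/
open Finset

/-- Preferences (linear orders) on `X`, encoded as rank functions: `x ≻ y` iff `σ x < σ y`. -/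
abbrev Pref (X : Type*) [Fintype X] : Type _ := X ≃ Fin (Fintype.card X)

/-- `N(x,A)`: the set of linear orders maximized by `x` on `A`. -/
def Npref {X : Type*} [Fintype X] [DecidableEq X] (x : X) (A : Finset X) :
    Finset (Pref X) :=
  Finset.univ.filter (fun σ => ∀ a ∈ A, a ≠ x → σ x < σ a)

/-- `I(x,A)`: the set of linear orders ranking `X \ A` above `x` and `x` above `A \ {x}`. -/
def Ipref {X : Type*} [Fintype X] [DecidableEq X] (x : X) (A : Finset X) :
    Finset (Pref X) :=
  Finset.univ.filter (fun σ => (∀ z, z ∉ A → σ z < σ x) ∧ ∀ a ∈ A, a ≠ x → σ x < σ a)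

/-- `ν` is a probability distribution over preferences. -/
def IsDist {X : Type*} [Fintype X] [DecidableEq X] (ν : Pref X → ℝ) : Prop :=
  (∀ σ, 0 ≤ ν σ) ∧ ∑ σ, ν σ = 1

/-- `t` is a transition function: for each choice and preference, a distribution over
next-period preferences; `t x σ σ'` is the weight on `σ'` given input `(x, σ)`. -/
def IsTransition {X : Type*} [Fintype X] [DecidableEq X]
    (t : X → Pref X → Pref X → ℝ) : Prop :=
  (∀ x σ σ', 0 ≤ t x σ σ') ∧ ∀ x σ, ∑ σ', t x σ σ' = 1

/-- `(ν, t)` is a consumption dependent random utility representation of `p`. -/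
def IsCDRUMRep {X : Type*} [Fintype X] [DecidableEq X]
    (p : X → X → Finset X → Finset X → ℝ) (ν : Pref X → ℝ)
    (t : X → Pref X → Pref X → ℝ) : Prop :=
  ∀ (A B : Finset X), ∀ x ∈ A, ∀ y ∈ B,
    p x y A B = ∑ σ ∈ Npref x A, ∑ σ' ∈ Npref y B, ν σ * t x σ σ'


private lemma ind_sum {α : Type*} [Fintype α] (s : Finset α) [DecidablePred (· ∈ s)]
    (f : α → ℝ) :
    ∑ i ∈ s, f i = ∑ i, (if i ∈ s then 1 else 0) * f i := by
  classical
  simp only [ite_mul, one_mul, zero_mul]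
  rw [← Finset.sum_filter, Finset.filter_mem_eq_inter, Finset.univ_inter]

lemma key {X : Type*} [Fintype X] [DecidableEq X] (x : X) (A : Finset X) (hx : x ∈ A)
    (σ : Pref X) :
    ∑ A' ∈ Finset.univ.filter (fun A' => A ⊆ A'),
      (-1 : ℝ) ^ ((A' \ A).card) * (if σ ∈ Npref x A' then 1 else 0)
    = if σ ∈ Ipref x A then 1 else 0 := by
  classical
  set S : Finset X := insert x (univ.filter (fun a => σ x < σ a)) with hS
  have hmem : ∀ A' : Finset X, σ ∈ Npref x A' ↔ A' ⊆ S := by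
    intro A'
    simp only [Npref, mem_filter, mem_univ, true_and]
    constructor
    · intro h a ha
      by_cases hax : a = x
      · simp [hS, hax]
      · simp [hS, hax, h a ha hax]
    · intro h a ha hax
      have := h ha
      simp [hS, hax] at this
      exact this
  have hite : ∀ A' : Finset X, (if σ ∈ Npref x A' then (1:ℝ) else 0) = if A' ⊆ S then 1 else 0 := by
    intro A'; simp [hmem A']
  simp only [hite, mul_ite, mul_one, mul_zero]
  rw [← Finset.sum_filter, Finset.filter_filter]
  by_cases hAS : A ⊆ S
  · have : ∑ A' ∈ univ.filter (fun A' => A ⊆ A' ∧ A' ⊆ S), (-1:ℝ) ^ ((A' \ A).card)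
        = ∑ T ∈ (S \ A).powerset, (-1:ℝ) ^ T.card := by
      apply Finset.sum_nbij' (fun A' => A' \ A) (fun T => A ∪ T)
      · intro A' hA'
        simp only [mem_filter, mem_univ, true_and] at hA'
        exact mem_powerset.2 (sdiff_subset_sdiff hA'.2 (Subset.refl A))
      · intro T hT
        rw [mem_powerset] at hT
        simp only [mem_filter, mem_univ, true_and]
        exact ⟨subset_union_left, union_subset hAS (hT.trans sdiff_subset)⟩
      · intro A' hA'
        simp only [mem_filter, mem_univ, true_and] at hA'
        exact Finset.union_sdiff_of_subset hA'.1
      · intro T hT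
        rw [mem_powerset] at hT
        exact Finset.union_sdiff_cancel_left (Finset.sdiff_disjoint.mono_left hT).symm
      · intro A' hA'; rfl
    have hcast : ∑ T ∈ (S \ A).powerset, (-1:ℝ) ^ T.card = if S \ A = ∅ then 1 else 0 := by
      have h := Finset.sum_powerset_neg_one_pow_card (x := S \ A)
      calc ∑ T ∈ (S \ A).powerset, (-1:ℝ) ^ T.card
          = ((∑ T ∈ (S \ A).powerset, (-1:ℤ) ^ T.card : ℤ) : ℝ) := by push_cast; rfl
        _ = _ := by rw [h]; split <;> simp
    rw [this, hcast]
    have hiff : S \ A = ∅ ↔ σ ∈ Ipref x A := by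
      rw [sdiff_eq_empty_iff_subset]
      simp only [Ipref, mem_filter, mem_univ, true_and]
      constructor
      · intro hSA
        refine ⟨fun z hz => ?_, fun a ha hax => ?_⟩
        · have hzS : z ∉ S := fun h => hz (hSA h)
          simp only [hS, mem_insert, mem_filter, mem_univ, true_and, not_or, not_lt] at hzS
          rcases lt_or_eq_of_le hzS.2 with h | h
          · exact h
          · exact absurd (σ.injective h) hzS.1
        · have := hAS ha
          simp only [hS, mem_insert, mem_filter, mem_univ, true_and] at this
          rcases this with h | h
          · exact absurd h hax
          · exact h
      · rintro ⟨h1, h2⟩ z hz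
        simp only [hS, mem_insert, mem_filter, mem_univ, true_and] at hz
        rcases hz with rfl | hz
        · exact hx
        · by_contra hzA
          exact absurd (h1 z hzA) (not_lt.2 hz.le)
    by_cases he : S \ A = ∅
    · simp [he, hiff.mp he]
    · have hn : σ ∉ Ipref x A := fun hc => he (hiff.mpr hc)
      simp [he, hn]
  · have h1 : univ.filter (fun A' => A ⊆ A' ∧ A' ⊆ S) = ∅ := by
      apply Finset.filter_false_of_mem
      intro A' _ ⟨hA1, hA2⟩
      exact hAS (hA1.trans hA2)
    have h2 : σ ∉ Ipref x A := by
      intro hσ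
      simp only [Ipref, mem_filter, mem_univ, true_and] at hσ
      apply hAS
      intro a ha
      by_cases hax : a = x
      · simp [hS, hax]
      · simp [hS, hax, hσ.2 a ha hax]
    simp [h1, h2]


/-- CDRUM consistency implies complete monotonicity: the Möbius inverse of `p` is
nonnegative. -/
theorem stmt7 {X : Type*} [Fintype X] [DecidableEq X]
    (p : X → X → Finset X → Finset X → ℝ)
    (h : ∃ ν : Pref X → ℝ, ∃ t : X → Pref X → Pref X → ℝ,
      IsDist ν ∧ IsTransition t ∧ IsCDRUMRep p ν t) :
    ∀ (A B : Finset X), ∀ x ∈ A, ∀ y ∈ B, 0 ≤ mob2 p x y A B := by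
  obtain ⟨ν, t, ⟨hν0, -⟩, ⟨ht0, -⟩, hrep⟩ := h
  intro A B x hx y hy
  classical
  set FA := Finset.univ.filter (fun A' => A ⊆ A') with hFA
  set FB := Finset.univ.filter (fun B' => B ⊆ B') with hFB
  set g : Pref X → Pref X → ℝ := fun σ σ' => ν σ * t x σ σ' with hg
  set a : Finset X → Pref X → ℝ :=
    fun A' σ => (-1 : ℝ) ^ ((A' \ A).card) * (if σ ∈ Npref x A' then 1 else 0) with ha
  set b : Finset X → Pref X → ℝ :=
    fun B' σ' => (-1 : ℝ) ^ ((B' \ B).card) * (if σ' ∈ Npref y B' then 1 else 0) with hb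
  have step1 : mob2 p x y A B
      = ∑ A' ∈ FA, ∑ B' ∈ FB, ∑ σ, ∑ σ', a A' σ * b B' σ' * g σ σ' := by
    unfold mob2
    refine Finset.sum_congr rfl fun A' hA' => ?_
    refine Finset.sum_congr rfl fun B' hB' => ?_
    have hxA : x ∈ A' := (Finset.mem_filter.mp hA').2 hx
    have hyB : y ∈ B' := (Finset.mem_filter.mp hB').2 hy
    rw [hrep A' B' x hxA y hyB]
    have e1 : ∑ σ ∈ Npref x A', ∑ σ' ∈ Npref y B', ν σ * t x σ σ'
        = ∑ σ, ∑ σ', (if σ ∈ Npref x A' then (1:ℝ) else 0) *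
            ((if σ' ∈ Npref y B' then (1:ℝ) else 0) * (ν σ * t x σ σ')) := by
      rw [ind_sum (Npref x A') (fun σ => ∑ σ' ∈ Npref y B', ν σ * t x σ σ')]
      refine Finset.sum_congr rfl fun σ _ => ?_
      rw [ind_sum (Npref y B') (fun σ' => ν σ * t x σ σ'), Finset.mul_sum]
    rw [e1, Finset.mul_sum]
    refine Finset.sum_congr rfl fun σ _ => ?_
    rw [Finset.mul_sum]
    refine Finset.sum_congr rfl fun σ' _ => ?_
    simp only [ha, hb, hg, pow_add]
    ring
  have step2 : (∑ A' ∈ FA, ∑ B' ∈ FB, ∑ σ, ∑ σ', a A' σ * b B' σ' * g σ σ')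
      = ∑ σ, ∑ σ', ∑ A' ∈ FA, ∑ B' ∈ FB, a A' σ * b B' σ' * g σ σ' := by
    have s1 : (∑ A' ∈ FA, ∑ B' ∈ FB, ∑ σ, ∑ σ', a A' σ * b B' σ' * g σ σ')
        = ∑ A' ∈ FA, ∑ σ, ∑ B' ∈ FB, ∑ σ', a A' σ * b B' σ' * g σ σ' :=
      Finset.sum_congr rfl fun A' _ => Finset.sum_comm
    have s2 : (∑ A' ∈ FA, ∑ σ, ∑ B' ∈ FB, ∑ σ', a A' σ * b B' σ' * g σ σ')
        = ∑ σ, ∑ A' ∈ FA, ∑ B' ∈ FB, ∑ σ', a A' σ * b B' σ' * g σ σ' :=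
      Finset.sum_comm
    have s3 : (∑ σ, ∑ A' ∈ FA, ∑ B' ∈ FB, ∑ σ', a A' σ * b B' σ' * g σ σ')
        = ∑ σ, ∑ A' ∈ FA, ∑ σ', ∑ B' ∈ FB, a A' σ * b B' σ' * g σ σ' :=
      Finset.sum_congr rfl fun σ _ => Finset.sum_congr rfl fun A' _ => Finset.sum_comm
    have s4 : (∑ σ, ∑ A' ∈ FA, ∑ σ', ∑ B' ∈ FB, a A' σ * b B' σ' * g σ σ')
        = ∑ σ, ∑ σ', ∑ A' ∈ FA, ∑ B' ∈ FB, a A' σ * b B' σ' * g σ σ' :=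
      Finset.sum_congr rfl fun σ _ => Finset.sum_comm
    rw [s1, s2, s3, s4]
  rw [step1, step2]
  refine Finset.sum_nonneg fun σ _ => Finset.sum_nonneg fun σ' _ => ?_
  have hfac : (∑ A' ∈ FA, ∑ B' ∈ FB, a A' σ * b B' σ' * g σ σ')
      = (∑ A' ∈ FA, a A' σ) * (∑ B' ∈ FB, b B' σ') * g σ σ' := by
    rw [Finset.sum_mul_sum, Finset.sum_mul]
    refine Finset.sum_congr rfl fun A' _ => ?_
    rw [Finset.sum_mul]
  rw [hfac]
  have h1 : (0:ℝ) ≤ ∑ A' ∈ FA, a A' σ := by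
    rw [hFA, ha, key x A hx σ]; positivity
  have h2 : (0:ℝ) ≤ ∑ B' ∈ FB, b B' σ' := by
    rw [hFB, hb, key y B hy σ']; positivity
  exact mul_nonneg (mul_nonneg h1 h2) (mul_nonneg (hν0 σ) (ht0 x σ σ'))
end

section
/- If a random joint choice rule p is consistent with SI-CDRUM (CDRUM with a state independent transition function), then p satisfies choice set independence: for each y ∈ B ⊆ X and each pair (x,A), (x,A') with p(x,A) > 0 and p(x,A') > 0, p(x,y,A,B)/p(x,A) = p(x,y,A',B)/p(x,A'). -/
open Finset

/-- SI-CDRUM (CDRUM with a state independent transition function, `t x σ = t x σ'`)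
implies choice set independence: the second-period conditional choice frequencies
`p(x,y,A,B)/p(x,A)` do not depend on the first-period menu `A`, where
`p(x,A) := Σ_{y∈X} p(x,y,A,X)`. -/
theorem stmt9 {X : Type*} [Fintype X] [DecidableEq X]
    (p : X → X → Finset X → Finset X → ℝ)
    (h : ∃ ν : Pref X → ℝ, ∃ t : X → Pref X → Pref X → ℝ,
      IsDist ν ∧ IsTransition t ∧
      (∀ x σ σ', t x σ = t x σ') ∧ IsCDRUMRep p ν t) :
    ∀ (B : Finset X), ∀ y ∈ B, ∀ (A A' : Finset X), ∀ x, x ∈ A → x ∈ A' →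
      0 < ∑ w ∈ Finset.univ, p x w A Finset.univ →
      0 < ∑ w ∈ Finset.univ, p x w A' Finset.univ →
      p x y A B / (∑ w ∈ Finset.univ, p x w A Finset.univ) =
        p x y A' B / (∑ w ∈ Finset.univ, p x w A' Finset.univ) := by
  obtain ⟨ν, t, hdist, htr, hsi, hrep⟩ := h
  intro B y hy A A' x hxA hxA' hpos hpos'
  haveI : Nonempty X := ⟨x⟩
  haveI : NeZero (Fintype.card X) := ⟨Fintype.card_ne_zero⟩
  set σ₀ : Pref X := Fintype.equivFin X with hσ₀
  -- factorization of p
  have hp : ∀ (C D : Finset X), x ∈ C → ∀ z ∈ D,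
      p x z C D = (∑ σ ∈ Npref x C, ν σ) * (∑ σ' ∈ Npref z D, t x σ₀ σ') := by
    intro C D hx z hz
    rw [hrep C D x hx z hz, Finset.sum_mul]
    refine Finset.sum_congr rfl fun σ _ => ?_
    rw [Finset.mul_sum]
    refine Finset.sum_congr rfl fun σ' _ => ?_
    rw [hsi x σ σ₀]
  -- partition lemma
  have hpart : ∀ f : Pref X → ℝ, ∑ w : X, ∑ σ' ∈ Npref w Finset.univ, f σ' = ∑ σ', f σ' := by
    intro f
    have : ∀ w : X, ∑ σ' ∈ Npref w Finset.univ, f σ'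
        = ∑ σ' : Pref X, if (∀ a : X, a ≠ w → σ' w < σ' a) then f σ' else 0 := by
      intro w
      rw [Npref, Finset.sum_filter]
      refine Finset.sum_congr rfl fun σ' _ => ?_
      congr 1
      simp
    simp_rw [this]
    rw [Finset.sum_comm]
    refine Finset.sum_congr rfl fun σ' _ => ?_
    have hiff : ∀ w : X, (∀ a : X, a ≠ w → σ' w < σ' a) ↔ w = σ'.symm 0 := by
      intro w
      constructor
      · intro hw
        by_contra hne
        have h0 : σ'.symm 0 ≠ w := fun hc => hne hc.symm
        have := hw (σ'.symm 0) h0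
        simp at this
      · rintro rfl a ha
        have : σ' a ≠ 0 := by
          intro hc
          exact ha (by rw [← hc]; simp)
        have h0 : σ' (σ'.symm 0) = 0 := by simp
        rw [h0]
        exact lt_of_le_of_ne (Fin.zero_le _) (Ne.symm this)
    calc (∑ w : X, if (∀ a : X, a ≠ w → σ' w < σ' a) then f σ' else 0)
        = ∑ w : X, if w = σ'.symm 0 then f σ' else 0 := by
          refine Finset.sum_congr rfl fun w _ => ?_
          simp [hiff w]
      _ = f σ' := by rw [Finset.sum_ite_eq' Finset.univ (σ'.symm 0) (fun _ => f σ')]; simp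
  -- marginal
  have hmarg : ∀ (C : Finset X), x ∈ C →
      (∑ w ∈ Finset.univ, p x w C Finset.univ) = ∑ σ ∈ Npref x C, ν σ := by
    intro C hx
    have : ∀ w : X, p x w C Finset.univ
        = (∑ σ ∈ Npref x C, ν σ) * (∑ σ' ∈ Npref w Finset.univ, t x σ₀ σ') :=
      fun w => hp C Finset.univ hx w (Finset.mem_univ w)
    simp_rw [this]
    rw [← Finset.mul_sum, hpart (t x σ₀), htr.2 x σ₀, mul_one]
  have hA := hmarg A hxA
  have hA' := hmarg A' hxA'
  have hνA : (∑ σ ∈ Npref x A, ν σ) ≠ 0 := by rw [← hA]; exact ne_of_gt hpos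
  have hνA' : (∑ σ ∈ Npref x A', ν σ) ≠ 0 := by rw [← hA']; exact ne_of_gt hpos'
  rw [hp A B hxA y hy, hp A' B hxA' y hy, hA, hA',
    mul_div_cancel_left₀ _ hνA, mul_div_cancel_left₀ _ hνA']
end

section
/- Suppose a random joint choice rule p satisfies complete monotonicity, marginality, and choice set independence. Then for each y ∈ B ⊆ X and each pair of histories (x,A), (x,A') with q(x,A) > 0 and q(x,A') > 0 (where q(x,A) = Σ_{y∈X} q(x,y,A,X)), one has q(x,y,A,B)/q(x,A) = q(x,y,A',B)/q(x,A'). -/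
open Finset

/-- If `p` satisfies complete monotonicity, marginality, and choice set independence, then
the Möbius-inverse analogue of choice set independence holds:
`q(x,y,A,B)/q(x,A) = q(x,y,A',B)/q(x,A')` whenever `q(x,A), q(x,A') > 0`, where
`p(x,A) := Σ_{y∈X} p(x,y,A,X)` and `q(x,A) := Σ_{y∈X} q(x,y,A,X)`. -/
theorem stmt10 {X : Type*} [Fintype X] [DecidableEq X]
    (p : X → X → Finset X → Finset X → ℝ)
    (hnn : ∀ (A B : Finset X), ∀ x ∈ A, ∀ y ∈ B, 0 ≤ p x y A B)
    (hsum : ∀ (A B : Finset X), A.Nonempty → B.Nonempty →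
      ∑ x ∈ A, ∑ y ∈ B, p x y A B = 1)
    (hcm : ∀ (A B : Finset X), ∀ x ∈ A, ∀ y ∈ B, 0 ≤ mob2 p x y A B)
    (hmarg : ∀ (A B C : Finset X), B.Nonempty → C.Nonempty → ∀ x ∈ A,
      ∑ y ∈ B, p x y A B = ∑ y ∈ C, p x y A C)
    (hcsi : ∀ (B : Finset X), ∀ y ∈ B, ∀ (A A' : Finset X), ∀ x, x ∈ A → x ∈ A' →
      0 < ∑ w ∈ Finset.univ, p x w A Finset.univ →
      0 < ∑ w ∈ Finset.univ, p x w A' Finset.univ →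
      p x y A B / (∑ w ∈ Finset.univ, p x w A Finset.univ) =
        p x y A' B / (∑ w ∈ Finset.univ, p x w A' Finset.univ)) :
    ∀ (B : Finset X), ∀ y ∈ B, ∀ (A A' : Finset X), ∀ x, x ∈ A → x ∈ A' →
      0 < ∑ w ∈ Finset.univ, mob2 p x w A Finset.univ →
      0 < ∑ w ∈ Finset.univ, mob2 p x w A' Finset.univ →
      mob2 p x y A B / (∑ w ∈ Finset.univ, mob2 p x w A Finset.univ) =
        mob2 p x y A' B / (∑ w ∈ Finset.univ, mob2 p x w A' Finset.univ) := by
  intro B y hyB A A' x hxA hxA' hQA hQA'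
  have huniv : (Finset.univ : Finset X).Nonempty := ⟨x, mem_univ x⟩
  -- p(x, {x}) = 1
  have hxx : ∑ w ∈ Finset.univ, p x w {x} Finset.univ = 1 := by
    have h := hsum {x} Finset.univ ⟨x, mem_singleton_self x⟩ huniv
    simpa using h
  -- factorization
  have hfact : ∀ (C D : Finset X), x ∈ C → y ∈ D →
      p x y C D = (∑ w ∈ Finset.univ, p x w C Finset.univ) * p x y {x} D := by
    intro C D hxC hyD
    set PC := ∑ w ∈ Finset.univ, p x w C Finset.univ with hPC
    have hPCnn : 0 ≤ PC := Finset.sum_nonneg fun w _ =>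
      hnn C Finset.univ x hxC w (mem_univ w)
    rcases lt_or_eq_of_le hPCnn with hpos | hzero
    · have h := hcsi D y hyD C {x} x hxC (mem_singleton_self x) hpos
        (by rw [hxx]; norm_num)
      rw [hxx, div_one] at h
      rw [div_eq_iff (ne_of_gt hpos)] at h
      rw [h]; ring
    · have hmz : ∑ y' ∈ D, p x y' C D = 0 := by
        rw [hmarg C D Finset.univ ⟨y, hyD⟩ huniv x hxC, ← hPC, ← hzero]
      have := (Finset.sum_eq_zero_iff_of_nonneg
        (fun y' hy' => hnn C D x hxC y' hy')).mp hmz y hyD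
      rw [this, ← hzero]; ring
  -- Q C := alternating sum of marginals
  set Q : Finset X → ℝ := fun C =>
    ∑ A'' ∈ Finset.univ.filter (fun A'' => C ⊆ A''),
      (-1 : ℝ) ^ ((A'' \ C).card) * ∑ w ∈ Finset.univ, p x w A'' Finset.univ
    with hQ
  set S : ℝ := ∑ B' ∈ Finset.univ.filter (fun B' => B ⊆ B'),
      (-1 : ℝ) ^ ((B' \ B).card) * p x y {x} B' with hS
  have hqsum : ∀ C : Finset X,
      ∑ w ∈ Finset.univ, mob2 p x w C Finset.univ = Q C := by
    intro C
    have hfil : Finset.univ.filter (fun B' : Finset X => Finset.univ ⊆ B') =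
        {Finset.univ} := by
      ext B'; simp [Finset.univ_subset_iff, eq_comm]
    simp only [mob2, hfil, Finset.sum_singleton, sdiff_self, card_empty,
      add_zero, hQ]
    rw [Finset.sum_comm]
    exact Finset.sum_congr rfl fun A'' _ => by simp [Finset.mul_sum]
  have hmobfact : ∀ C : Finset X, x ∈ C → mob2 p x y C B = Q C * S := by
    intro C hxC
    rw [hQ, hS, Finset.sum_mul_sum, mob2]
    refine Finset.sum_congr rfl fun A'' hA'' => Finset.sum_congr rfl fun B' hB' => ?_
    rw [hfact A'' B' ((mem_filter.mp hA'').2 hxC) ((mem_filter.mp hB').2 hyB), pow_add]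
    ring
  rw [hmobfact A hxA, hmobfact A' hxA', hqsum A, hqsum A',
    mul_div_cancel_left₀ S (ne_of_gt (by rwa [hqsum A] at hQA)),
    mul_div_cancel_left₀ S (ne_of_gt (by rwa [hqsum A'] at hQA'))]
end

section
/- In the habit formation logit model with an outside option o satisfying v_o = 0 and c_o = 0, the parameters are identified: for each x ∈ X, v_x = ln(p(x,X)/p(o,X)) and c_x = ln(p(x,X|x,X)/p(o,X|x,X)) − v_x. -/
open Finset Real

theorem div_div_div_eq_div_div (a b : ℝ) {S : ℝ} (hS : S ≠ 0) :
    (a / S) / (b / S) = a / b := by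
  field_simp

/-- Identification in the habit formation logit model: with the outside-option
normalization `v_o = 0`, `c_o = 0`, the parameters are recovered as
`v_x = ln(p(x,X)/p(o,X))` and `c_x = ln(p(x,X|x,X)/p(o,X|x,X)) − v_x`. -/
theorem stmt15 {X : Type*} [Fintype X] [DecidableEq X] (o : X)
    (v c : X → ℝ) (hc : ∀ x, 0 ≤ c x) (hvo : v o = 0) (hco : c o = 0)
    (p1 : X → Finset X → ℝ) (p2 : X → Finset X → X → Finset X → ℝ)
    (hp1 : ∀ x A, p1 x A = Real.exp (v x) / ∑ y ∈ A, Real.exp (v y))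
    (hp2 : ∀ y B x A, p2 y B x A =
      Real.exp (v y + if y = x then c y else 0) /
        ∑ z ∈ B, Real.exp (v z + if z = x then c z else 0)) :
    ∀ x : X,
      v x = Real.log (p1 x Finset.univ / p1 o Finset.univ) ∧
      c x = Real.log (p2 x Finset.univ x Finset.univ /
          p2 o Finset.univ x Finset.univ) - v x := by
  intro x
  have hS : (0:ℝ) < ∑ y : X, Real.exp (v y) :=
    Finset.sum_pos (fun y _ => Real.exp_pos _) ⟨x, Finset.mem_univ x⟩
  have hS2 : (0:ℝ) < ∑ z : X, Real.exp (v z + if z = x then c z else 0) :=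
    Finset.sum_pos (fun y _ => Real.exp_pos _) ⟨x, Finset.mem_univ x⟩
  have h1 : p1 x Finset.univ / p1 o Finset.univ = Real.exp (v x) / Real.exp (v o) := by
    rw [hp1, hp1, div_div_div_eq_div_div _ _ hS.ne']
  have h2 : p2 x Finset.univ x Finset.univ / p2 o Finset.univ x Finset.univ =
      Real.exp (v x + c x) / Real.exp (v o + if o = x then c o else 0) := by
    rw [hp2, hp2, if_pos rfl, div_div_div_eq_div_div _ _ hS2.ne']
  constructor
  · rw [h1, Real.log_div (Real.exp_ne_zero _) (Real.exp_ne_zero _),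
      Real.log_exp, Real.log_exp, hvo, sub_zero]
  · rw [h2, Real.log_div (Real.exp_ne_zero _) (Real.exp_ne_zero _),
      Real.log_exp, Real.log_exp, hvo]
    have : (if o = x then c o else 0) = 0 := by split <;> simp [hco]
    rw [this]
    ring
end

section
/- In the habit formation logit model, the probability vector p_s(x,X) = e^{v_x}(Σ_{y∈X} e^{v_y + c_y 𝟙{x=y}}) / Σ_{z∈X} e^{v_z}(Σ_{y∈X} e^{v_y + c_y 𝟙{z=y}}) is a stationary distribution of the Markov chain on X with transition probabilities P(x→w) = p(w,X|x,X) = e^{v_w + c_w 𝟙{w=x}} / Σ_{z∈X} e^{v_z + c_z 𝟙{z=x}}; that is, for all x, p_s(x,X) = Σ_{y∈X} p_s(y,X) P(y→x). -/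
open Finset Real

/-- The stationary distribution of the habit formation logit Markov chain: the vector
`p_s(x) = e^{v_x}(Σ_y e^{v_y + c_y 𝟙{x=y}}) / Σ_z e^{v_z}(Σ_y e^{v_y + c_y 𝟙{z=y}})`
satisfies `p_s(x) = Σ_y p_s(y) · P(y→x)` where
`P(y→x) = e^{v_x + c_x 𝟙{x=y}} / Σ_z e^{v_z + c_z 𝟙{z=y}}`. -/
theorem stmt16 {X : Type*} [Fintype X] [DecidableEq X] (v c : X → ℝ) :
    ∀ x : X,
      (Real.exp (v x) * ∑ y, Real.exp (v y + if x = y then c y else 0)) /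
          (∑ z, Real.exp (v z) * ∑ y, Real.exp (v y + if z = y then c y else 0)) =
        ∑ y,
          ((Real.exp (v y) * ∑ w, Real.exp (v w + if y = w then c w else 0)) /
              (∑ z, Real.exp (v z) * ∑ w, Real.exp (v w + if z = w then c w else 0))) *
            (Real.exp (v x + if x = y then c x else 0) /
              ∑ z, Real.exp (v z + if z = y then c z else 0)) := by
  intro x
  have hne : Nonempty X := ⟨x⟩
  have hS : ∀ y : X, (0:ℝ) < ∑ w, Real.exp (v w + if y = w then c w else 0) :=
    fun y => Finset.sum_pos (fun w _ => Real.exp_pos _) Finset.univ_nonempty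
  set D := ∑ z, Real.exp (v z) * ∑ w, Real.exp (v w + if z = w then c w else 0) with hD
  have hterm : ∀ y : X,
      ((Real.exp (v y) * ∑ w, Real.exp (v w + if y = w then c w else 0)) / D) *
        (Real.exp (v x + if x = y then c x else 0) /
          ∑ z, Real.exp (v z + if z = y then c z else 0)) =
      Real.exp (v x) * Real.exp (v y + if x = y then c y else 0) / D := by
    intro y
    have hrw : (∑ z, Real.exp (v z + if z = y then c z else 0)) =
        ∑ w, Real.exp (v w + if y = w then c w else 0) := by
      exact Finset.sum_congr rfl fun w _ => by simp [eq_comm]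
    rw [hrw]
    have hSy := (hS y).ne'
    have hexp : Real.exp (v y) * Real.exp (v x + if x = y then c x else 0) =
        Real.exp (v x) * Real.exp (v y + if x = y then c y else 0) := by
      by_cases h : x = y
      · subst h; simp [← Real.exp_add]
      · simp [h, ← Real.exp_add]; ring_nf
    rw [div_mul_div_comm, mul_right_comm, mul_div_mul_right _ _ hSy, hexp]
  rw [Finset.sum_congr rfl fun y _ => hterm y]
  rw [← Finset.sum_div, ← Finset.mul_sum]
end

section
/- A two-period random joint choice rule p has a learning logit representation if and only if it has a consumption dependent logit representation (c_x ∈ ℝ unrestricted). Moreover, if p has a learning logit representation, then p has a habit formation logit representation (c_x ≥ 0 for all x) if and only if p(x,X|x,X) ≥ p(x,X) for all x ∈ X. -/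
open Finset Real

variable {X : Type*} [Fintype X] [DecidableEq X]

/-- `p` has a consumption dependent logit representation (`c x ∈ ℝ` unrestricted). -/
def HasCDLogit (p1 : X → Finset X → ℝ) (p2 : X → Finset X → X → Finset X → ℝ) : Prop :=
  ∃ v c : X → ℝ,
    (∀ (A : Finset X), ∀ x ∈ A, p1 x A = Real.exp (v x) / ∑ y ∈ A, Real.exp (v y)) ∧
    (∀ (B : Finset X), ∀ y ∈ B, ∀ (x : X) (A : Finset X),
      p2 y B x A = Real.exp (v y + if y = x then c y else 0) /
        ∑ z ∈ B, Real.exp (v z + if z = x then c z else 0))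

/-- `p` has a habit formation logit representation (`c x ≥ 0` for all `x`). -/
def HasHFLogit (p1 : X → Finset X → ℝ) (p2 : X → Finset X → X → Finset X → ℝ) : Prop :=
  ∃ v c : X → ℝ, (∀ x, 0 ≤ c x) ∧
    (∀ (A : Finset X), ∀ x ∈ A, p1 x A = Real.exp (v x) / ∑ y ∈ A, Real.exp (v y)) ∧
    (∀ (B : Finset X), ∀ y ∈ B, ∀ (x : X) (A : Finset X),
      p2 y B x A = Real.exp (v y + if y = x then c y else 0) /
        ∑ z ∈ B, Real.exp (v z + if z = x then c z else 0))

/-- `p` has a learning logit representation: expected utilities `E x` govern first-period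
choice, and after consuming `x` the realized utility `V x` replaces `E x`. -/
def HasLearningLogit (p1 : X → Finset X → ℝ)
    (p2 : X → Finset X → X → Finset X → ℝ) : Prop :=
  ∃ E V : X → ℝ,
    (∀ (A : Finset X), ∀ x ∈ A, p1 x A = Real.exp (E x) / ∑ y ∈ A, Real.exp (E y)) ∧
    (∀ (B : Finset X), ∀ y ∈ B, ∀ (x : X) (A : Finset X),
      p2 y B x A = Real.exp (if y = x then V y else E y) /
        ∑ z ∈ B, Real.exp (if z = x then V z else E z))

lemma key_ite (v c : X → ℝ) (z x : X) :
    v z + (if z = x then c z else 0) = if z = x then v z + c z else v z := by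
  split <;> ring

lemma sum_split (f g : X → ℝ) (x : X) :
    ∑ z, Real.exp (if z = x then f z else g z)
      = Real.exp (f x) + ∑ z ∈ Finset.univ.erase x, Real.exp (g z) := by
  rw [← Finset.add_sum_erase _ _ (Finset.mem_univ x), if_pos rfl]
  congr 1
  refine Finset.sum_congr rfl fun z hz => ?_
  rw [if_neg (Finset.mem_erase.1 hz).1]

/-- A two-period rjcr has a learning logit representation iff it has a consumption
dependent logit representation; and a learning logit rjcr has a habit formation logit
representation iff `p(x,X|x,X) ≥ p(x,X)` for all `x`. -/
theorem stmt17 (p1 : X → Finset X → ℝ) (p2 : X → Finset X → X → Finset X → ℝ) :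
    (HasLearningLogit p1 p2 ↔ HasCDLogit p1 p2) ∧
    (HasLearningLogit p1 p2 →
      (HasHFLogit p1 p2 ↔
        ∀ x : X, p1 x Finset.univ ≤ p2 x Finset.univ x Finset.univ)) := by
  constructor
  · constructor
    · rintro ⟨E, V, h1, h2⟩
      refine ⟨E, fun x => V x - E x, h1, fun B y hy x A => ?_⟩
      rw [h2 B y hy x A]
      simp only [key_ite E (fun x => V x - E x)]
      congr 1
      · split <;> [ring_nf; rfl]
      · refine Finset.sum_congr rfl fun z _ => ?_
        congr 1
        split <;> [ring_nf; rfl]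
    · rintro ⟨v, c, h1, h2⟩
      refine ⟨v, fun x => v x + c x, h1, fun B y hy x A => ?_⟩
      rw [h2 B y hy x A]
      simp only [key_ite v c]
  · rintro ⟨E, V, h1, h2⟩
    constructor
    · rintro ⟨v, c, hc, g1, g2⟩
      intro x
      rw [g1 Finset.univ x (Finset.mem_univ x), g2 Finset.univ x (Finset.mem_univ x) x Finset.univ]
      simp only [key_ite v c, eq_self_iff_true, if_true]
      rw [sum_split (fun z => v z + c z) v x]
      rw [show (∑ y, Real.exp (v y)) = Real.exp (v x) + ∑ z ∈ Finset.univ.erase x, Real.exp (v z)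
        from (Finset.add_sum_erase _ _ (Finset.mem_univ x)).symm]
      set R := ∑ z ∈ Finset.univ.erase x, Real.exp (v z) with hR
      have hR0 : 0 ≤ R := Finset.sum_nonneg fun z _ => (Real.exp_pos _).le
      have ha : (0:ℝ) < Real.exp (v x) := Real.exp_pos _
      have hb : (0:ℝ) < Real.exp (v x + c x) := Real.exp_pos _
      have hab : Real.exp (v x) ≤ Real.exp (v x + c x) :=
        Real.exp_le_exp.2 (by linarith [hc x])
      rw [div_le_div_iff₀ (by linarith) (by linarith)]
      nlinarith
    · intro hineq
      rcases subsingleton_or_nontrivial X with hX | hX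
      · refine ⟨E, fun _ => 0, fun _ => le_refl 0, h1, fun B y hy x A => ?_⟩
        have hyx : y = x := Subsingleton.elim y x
        have hB : B = {y} :=
          Finset.eq_singleton_iff_unique_mem.2 ⟨hy, fun z _ => Subsingleton.elim z y⟩
        rw [h2 B y hy x A, hB]
        simp [hyx, Real.exp_ne_zero]
      · refine ⟨E, fun x => V x - E x, fun x => ?_, h1, fun B y hy x A => ?_⟩
        · have h := hineq x
          rw [h1 Finset.univ x (Finset.mem_univ x),
            h2 Finset.univ x (Finset.mem_univ x) x Finset.univ] at h
          rw [if_pos rfl, sum_split V E x] at h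
          rw [show (∑ y, Real.exp (E y))
              = Real.exp (E x) + ∑ z ∈ Finset.univ.erase x, Real.exp (E z)
            from (Finset.add_sum_erase _ _ (Finset.mem_univ x)).symm] at h
          set R := ∑ z ∈ Finset.univ.erase x, Real.exp (E z) with hR
          have hRpos : 0 < R := by
            obtain ⟨y, hyx⟩ := exists_ne x
            exact Finset.sum_pos (fun z _ => Real.exp_pos _)
              ⟨y, Finset.mem_erase.2 ⟨hyx, Finset.mem_univ y⟩⟩
          have ha : (0:ℝ) < Real.exp (E x) := Real.exp_pos _
          have hb : (0:ℝ) < Real.exp (V x) := Real.exp_pos _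
          rw [div_le_div_iff₀ (by linarith) (by linarith)] at h
          have hEV : Real.exp (E x) ≤ Real.exp (V x) := by nlinarith
          have := Real.exp_le_exp.1 hEV
          show (0:ℝ) ≤ V x - E x
          linarith
        · rw [h2 B y hy x A]
          simp only [key_ite E (fun x => V x - E x)]
          congr 1
          · split <;> [ring_nf; rfl]
          · refine Finset.sum_congr rfl fun z _ => ?_
            congr 1
            split <;> [ring_nf; rfl]
end

section
/- Consider the directed graph on the power set of a finite set X with an edge from B to B\{y} for each y ∈ B, with nonnegative edge capacities q(y,B), satisfying flow conservation at every node A with ∅ ⊊ A ⊊ X (Σ_{x∈A} q(x,A) = Σ_{z∉A} q(z,A∪{z})) and total outflow from X equal to 1 (Σ_{x∈X} q(x,X) = 1). Then there exists a probability distribution ν over maximal chains X = A₀ ⊋ A₁ ⊋ … ⊋ A_{|X|} = ∅ (equivalently, linear orders of X) such that each edge capacity q(y,B) equals the total ν-probability of chains using the edge from B to B\{y}. -/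
open Finset
set_option linter.unusedSectionVars false

namespace Stmt18

variable {X : Type*} [Fintype X] [DecidableEq X]

/-- The chain set of `σ` containing `y` as minimum. -/
def S (σ : X ≃ Fin (Fintype.card X)) (y : X) : Finset X :=
  Finset.univ.filter (fun z => σ y ≤ σ z)

lemma mem_S {σ : X ≃ Fin (Fintype.card X)} {y z : X} : z ∈ S σ y ↔ σ y ≤ σ z := by
  simp [S]

lemma self_mem_S {σ : X ≃ Fin (Fintype.card X)} (y : X) : y ∈ S σ y :=
  mem_S.2 le_rfl

lemma S_min_unique {σ : X ≃ Fin (Fintype.card X)} {A : Finset X} {x x' : X}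
    (h : A = S σ x) (h' : A = S σ x') : x = x' := by
  have hx : x ∈ A := h ▸ self_mem_S x
  have hx' : x' ∈ A := h' ▸ self_mem_S x'
  have h1 : σ x ≤ σ x' := mem_S.1 (h ▸ hx')
  have h2 : σ x' ≤ σ x := mem_S.1 (h' ▸ hx)
  exact σ.injective (le_antisymm h1 h2)

/-- `insert z A = S σ z` with `z ∉ A` iff `A` is the strict upper chain set of `z`. -/
lemma insert_eq_S_iff {σ : X ≃ Fin (Fintype.card X)} {A : Finset X} {z : X} (hz : z ∉ A) :
    insert z A = S σ z ↔ A = Finset.univ.filter (fun w => σ z < σ w) := by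
  constructor
  · intro h
    ext w
    simp only [mem_filter, mem_univ, true_and]
    constructor
    · intro hw
      have hwz : w ≠ z := fun e => hz (e ▸ hw)
      have : w ∈ S σ z := h ▸ mem_insert_of_mem hw
      exact lt_of_le_of_ne (mem_S.1 this) (fun e => hwz (σ.injective e.symm))
    · intro hw
      have : w ∈ insert z A := h ▸ mem_S.2 hw.le
      rcases mem_insert.1 this with e | e
      · exact absurd hw (by rw [e]; exact lt_irrefl _)
      · exact e
  · intro h
    ext w
    simp only [mem_insert, mem_S, h, mem_filter, mem_univ, true_and]
    constructor
    · rintro (rfl | hw)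
      · exact le_rfl
      · exact hw.le
    · intro hw
      rcases eq_or_lt_of_le hw with e | e
      · exact Or.inl (σ.injective e.symm)
      · exact Or.inr e

end Stmt18

namespace Stmt18
variable {X : Type*} [Fintype X] [DecidableEq X]

lemma in_unique {σ : X ≃ Fin (Fintype.card X)} {A : Finset X} {z z' : X}
    (hz : z ∉ A) (hz' : z' ∉ A) (h : insert z A = S σ z) (h' : insert z' A = S σ z') :
    z = z' := by
  rw [insert_eq_S_iff hz] at h
  rw [insert_eq_S_iff hz'] at h'
  rcases lt_trichotomy (σ z) (σ z') with hlt | heq | hlt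
  · exact absurd (h ▸ (mem_filter.2 ⟨mem_univ _, hlt⟩)) hz'
  · exact σ.injective heq
  · exact absurd (h' ▸ (mem_filter.2 ⟨mem_univ _, hlt⟩)) hz

lemma exists_S_iff {σ : X ≃ Fin (Fintype.card X)} {A : Finset X}
    (hne : A.Nonempty) (hnu : A ≠ Finset.univ) :
    (∃ x, A = S σ x) ↔ ∃ z ∉ A, insert z A = S σ z := by
  constructor
  · rintro ⟨x, rfl⟩
    -- σ x ≠ 0
    obtain ⟨w, hw⟩ : ∃ w, w ∉ S σ x := by
      by_contra hcon
      push_neg at hcon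
      exact hnu (Finset.eq_univ_iff_forall.2 hcon)
    have hwlt : ¬ σ x ≤ σ w := fun h => hw (mem_S.2 h)
    have hx0 : (σ x : ℕ) ≠ 0 := by
      intro h0
      exact hwlt (by rw [Fin.le_def, h0]; exact Nat.zero_le _)
    have hlt : (σ x : ℕ) - 1 < Fintype.card X := lt_trans (Nat.sub_lt (Nat.pos_of_ne_zero hx0) one_pos) (σ x).isLt
    set z := σ.symm ⟨(σ x : ℕ) - 1, hlt⟩ with hzdef
    have hσz : (σ z : ℕ) = (σ x : ℕ) - 1 := by rw [hzdef, Equiv.apply_symm_apply]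
    have hzA : z ∉ S σ x := by
      rw [mem_S, Fin.le_def, hσz]
      omega
    refine ⟨z, hzA, (insert_eq_S_iff hzA).2 ?_⟩
    ext w
    rw [mem_S, Fin.le_def, mem_filter, Fin.lt_def, hσz]
    constructor
    · intro h; exact ⟨mem_univ _, by omega⟩
    · rintro ⟨-, h⟩; omega
  · rintro ⟨z, hz, hins⟩
    rw [insert_eq_S_iff hz] at hins
    obtain ⟨w, hw⟩ := hne
    have hw' : w ∈ Finset.univ.filter (fun w => σ z < σ w) := hins ▸ hw
    have hσw : σ z < σ w := (mem_filter.1 hw').2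
    have hlt : (σ z : ℕ) + 1 < Fintype.card X := by
      have := (σ w).isLt
      rw [Fin.lt_def] at hσw
      omega
    set x := σ.symm ⟨(σ z : ℕ) + 1, hlt⟩ with hxdef
    have hσx : (σ x : ℕ) = (σ z : ℕ) + 1 := by rw [hxdef, Equiv.apply_symm_apply]
    refine ⟨x, ?_⟩
    rw [hins]
    ext u
    rw [mem_filter, mem_S, Fin.le_def, Fin.lt_def, hσx]
    constructor
    · rintro ⟨-, h⟩; omega
    · intro h; exact ⟨mem_univ _, by omega⟩

lemma sum_out (σ : X ≃ Fin (Fintype.card X)) (A : Finset X) (t : ℝ) :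
    ∑ x ∈ A, (if A = S σ x then t else 0) = if ∃ x, A = S σ x then t else 0 := by
  by_cases h : ∃ x, A = S σ x
  · obtain ⟨x₀, hx₀⟩ := h
    rw [if_pos ⟨x₀, hx₀⟩]
    rw [Finset.sum_eq_single x₀]
    · rw [if_pos hx₀]
    · intro b _ hb
      rw [if_neg (fun hA => hb (S_min_unique hA hx₀))]
    · intro hx
      exact absurd (hx₀ ▸ self_mem_S x₀) hx
  · rw [if_neg h]
    apply Finset.sum_eq_zero
    intro x _
    rw [if_neg (fun hA => h ⟨x, hA⟩)]

lemma sum_in (σ : X ≃ Fin (Fintype.card X)) {A : Finset X}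
    (hne : A.Nonempty) (hnu : A ≠ Finset.univ) (t : ℝ) :
    ∑ z ∈ Aᶜ, (if insert z A = S σ z then t else 0) = if ∃ x, A = S σ x then t else 0 := by
  by_cases h : ∃ x, A = S σ x
  · obtain ⟨z₀, hz₀, hins₀⟩ := (exists_S_iff hne hnu).1 h
    rw [if_pos h]
    rw [Finset.sum_eq_single z₀]
    · rw [if_pos hins₀]
    · intro b hb hbz
      rw [if_neg (fun hA => hbz (in_unique (Finset.mem_compl.1 hb) hz₀ hA hins₀))]
    · intro hz
      exact absurd (Finset.mem_compl.2 hz₀) hz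
  · rw [if_neg h]
    apply Finset.sum_eq_zero
    intro z hz
    refine if_neg (fun hA => h ?_)
    exact (exists_S_iff hne hnu).2 ⟨z, Finset.mem_compl.1 hz, hA⟩

lemma sum_out_univ [Nonempty X] (σ : X ≃ Fin (Fintype.card X)) (t : ℝ) :
    ∑ x : X, (if Finset.univ = S σ x then t else 0) = t := by
  have hcard : 0 < Fintype.card X := Fintype.card_pos
  have h : (Finset.univ : Finset X) = S σ (σ.symm ⟨0, hcard⟩) := by
    ext w
    simp only [mem_univ, mem_S, true_iff, Fin.le_def, Equiv.apply_symm_apply]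
    exact Nat.zero_le _
  calc ∑ x ∈ Finset.univ, (if Finset.univ = S σ x then t else 0)
      = if ∃ x, (Finset.univ : Finset X) = S σ x then t else 0 := sum_out σ Finset.univ t
    _ = t := if_pos ⟨_, h⟩

end Stmt18

namespace Stmt18
variable {X : Type*} [Fintype X] [DecidableEq X]

lemma all_zero (q : X → Finset X → ℝ)
    (hnn : ∀ (B : Finset X), ∀ y ∈ B, 0 ≤ q y B)
    (hcons : ∀ A : Finset X, A.Nonempty → A ≠ Finset.univ →
      ∑ x ∈ A, q x A = ∑ z ∈ Aᶜ, q z (insert z A))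
    (h0 : ∑ x, q x Finset.univ = 0) :
    ∀ B : Finset X, ∀ y ∈ B, q y B = 0 := by
  have key : ∀ k : ℕ, ∀ B : Finset X, Bᶜ.card = k → ∀ y ∈ B, q y B = 0 := by
    intro k
    induction k using Nat.strong_induction_on with
    | _ k ih =>
      intro B hBk y hy
      have hBsum : ∑ x ∈ B, q x B = 0 := by
        rcases eq_or_ne B Finset.univ with rfl | hBu
        · exact h0
        · rw [hcons B ⟨y, hy⟩ hBu]
          apply Finset.sum_eq_zero
          intro z hz
          have hzB : z ∉ B := Finset.mem_compl.1 hz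
          have hcompl : (insert z B)ᶜ.card = k - 1 := by
            rw [Finset.compl_insert, Finset.card_erase_of_mem hz, hBk]
          have hkpos : 0 < k := by
            rw [← hBk]; exact Finset.card_pos.2 ⟨z, hz⟩
          exact ih (k - 1) (by omega) (insert z B) hcompl z (Finset.mem_insert_self z B)
      have := (Finset.sum_eq_zero_iff_of_nonneg (fun x hx => hnn B x hx)).1 hBsum
      exact this y hy
  intro B y hy
  exact key Bᶜ.card B rfl y hy

lemma exists_chain_list (q : X → Finset X → ℝ)
    (hnn : ∀ (B : Finset X), ∀ y ∈ B, 0 ≤ q y B)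
    (hcons : ∀ A : Finset X, A.Nonempty → A ≠ Finset.univ →
      ∑ x ∈ A, q x A = ∑ z ∈ Aᶜ, q z (insert z A)) :
    ∀ (k : ℕ) (B : Finset X), B.card = k → 0 < ∑ y ∈ B, q y B →
      ∃ l : List X, l.Nodup ∧ l.toFinset = B ∧
        ∀ (i : ℕ) (h : i < l.length), 0 < q l[i] ((l.drop i).toFinset) := by
  intro k
  induction k using Nat.strong_induction_on with
  | _ k ih =>
    intro B hBk hBpos
    -- find a positive out-edge
    obtain ⟨y, hy, hqy⟩ : ∃ y ∈ B, 0 < q y B := by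
      by_contra hcon
      push_neg at hcon
      have : ∑ y ∈ B, q y B = 0 :=
        le_antisymm (Finset.sum_nonpos fun y hyB => hcon y hyB)
          (Finset.sum_nonneg fun y hyB => hnn B y hyB)
      rw [this] at hBpos; exact lt_irrefl _ hBpos
    have hinsert : insert y (B.erase y) = B := Finset.insert_erase hy
    rcases Finset.eq_empty_or_nonempty (B.erase y) with hE | hne'
    · -- B = {y}
      refine ⟨[y], List.nodup_singleton y, ?_, ?_⟩
      · rw [List.toFinset_cons, List.toFinset_nil, ← hE, hinsert]
      · intro i h
        obtain rfl : i = 0 := by simpa using h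
        simpa using (by rw [show ({y} : Finset X) = B from by rw [← hinsert, hE]; rfl]; exact hqy :
          0 < q y ({y} : Finset X))
    · set B' := B.erase y with hB'
      have hB'u : B' ≠ Finset.univ := by
        intro hu
        have h1 : B'.card < B.card := Finset.card_erase_lt_of_mem hy
        have h2 : B.card ≤ B'.card := by
          rw [hu]; exact Finset.card_le_card (Finset.subset_univ B)
        omega
      have hB'pos : 0 < ∑ x ∈ B', q x B' := by
        rw [hcons B' hne' hB'u]
        have hyB' : y ∈ B'ᶜ := Finset.mem_compl.2 (Finset.notMem_erase y B)
        have hle : q y (insert y B') ≤ ∑ z ∈ B'ᶜ, q z (insert z B') :=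
          Finset.single_le_sum (fun z _ => hnn _ z (Finset.mem_insert_self z _)) hyB'
        rw [hinsert] at hle
        exact lt_of_lt_of_le hqy hle
      have hcard' : B'.card = k - 1 := by
        rw [hB', Finset.card_erase_of_mem hy, hBk]
      have hkpos : 0 < k := by rw [← hBk]; exact Finset.card_pos.2 ⟨y, hy⟩
      obtain ⟨l', hnd', htf', hprop'⟩ := ih (k - 1) (by omega) B' hcard' hB'pos
      refine ⟨y :: l', ?_, ?_, ?_⟩
      · rw [List.nodup_cons]
        refine ⟨fun hmem => Finset.notMem_erase y B ?_, hnd'⟩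
        rw [← hB', ← htf']
        exact List.mem_toFinset.2 hmem
      · rw [List.toFinset_cons, htf', hinsert]
      · intro i h
        match i with
        | 0 =>
          simpa using (by
            rw [show (y :: l').toFinset = B from by rw [List.toFinset_cons, htf', hinsert]]
            exact hqy : 0 < q y ((y :: l').toFinset))
        | (j + 1) =>
          have hj : j < l'.length := by simpa using h
          simpa using hprop' j hj

lemma mem_drop_iff {l : List X} (nd : l.Nodup) {z : X} (hz : z ∈ l) :
    ∀ k : ℕ, z ∈ l.drop k ↔ k ≤ l.idxOf z := by
  induction l with
  | nil => exact absurd hz List.not_mem_nil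
  | cons h r ihl =>
    intro k
    match k with
    | 0 => simp only [List.drop_zero]; exact iff_of_true hz (Nat.zero_le _)
    | (k + 1) =>
      rw [List.drop_succ_cons]
      by_cases hzh : z = h
      · subst hzh
        have hnotr : z ∉ r := (List.nodup_cons.1 nd).1
        simp only [List.idxOf_cons_self]
        constructor
        · intro hmem; exact absurd (List.mem_of_mem_drop hmem) hnotr
        · omega
      · have hzr : z ∈ r := by
          rcases List.mem_cons.1 hz with e | e
          · exact absurd e hzh
          · exact e
        rw [ihl (List.nodup_cons.1 nd).2 hzr k, List.idxOf_cons_ne _ (Ne.symm hzh)]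
        omega

end Stmt18

namespace Stmt18
variable {X : Type*} [Fintype X] [DecidableEq X]

lemma exists_sigma [Nonempty X] (q : X → Finset X → ℝ)
    (hnn : ∀ (B : Finset X), ∀ y ∈ B, 0 ≤ q y B)
    (hcons : ∀ A : Finset X, A.Nonempty → A ≠ Finset.univ →
      ∑ x ∈ A, q x A = ∑ z ∈ Aᶜ, q z (insert z A))
    (hpos : 0 < ∑ x, q x Finset.univ) :
    ∃ σ : X ≃ Fin (Fintype.card X), ∀ y, 0 < q y (S σ y) := by
  obtain ⟨l, hnd, htf, hprop⟩ :=
    exists_chain_list q hnn hcons (Finset.univ.card) Finset.univ rfl hpos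
  have hmem : ∀ x : X, x ∈ l := fun x => List.mem_toFinset.1 (htf ▸ Finset.mem_univ x)
  have hlen : l.length = Fintype.card X := by
    rw [← List.toFinset_card_of_nodup hnd, htf, Finset.card_univ]
  refine ⟨(hnd.getEquivOfForallMemList l hmem).symm.trans (finCongr hlen), ?_⟩
  intro y
  set σ := (hnd.getEquivOfForallMemList l hmem).symm.trans (finCongr hlen) with hσ
  have hval : ∀ z : X, (σ z : ℕ) = l.idxOf z := by
    intro z
    simp [hσ, List.Nodup.getEquivOfForallMemList, finCongr, Equiv.trans_apply]
  have hS : S σ y = (l.drop (l.idxOf y)).toFinset := by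
    ext z
    rw [mem_S, Fin.le_def, hval, hval, List.mem_toFinset, mem_drop_iff hnd (hmem z)]
  have hidx : l.idxOf y < l.length := List.idxOf_lt_length_iff.2 (hmem y)
  have := hprop (l.idxOf y) hidx
  have he : l[l.idxOf y] = y := List.getElem_idxOf hidx
  rw [he] at this
  rwa [hS]

end Stmt18

namespace Stmt18
variable {X : Type*} [Fintype X] [DecidableEq X]

/-- The support of a capacity function: edges with nonzero capacity. -/
noncomputable def supp (q : X → Finset X → ℝ) : Finset (X × Finset X) :=
  @Finset.filter _ (fun p => p.1 ∈ p.2 ∧ q p.1 p.2 ≠ 0) (Classical.decPred _) Finset.univ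

lemma mem_supp {q : X → Finset X → ℝ} {p : X × Finset X} :
    p ∈ supp q ↔ p.1 ∈ p.2 ∧ q p.1 p.2 ≠ 0 := by
  rw [supp, @Finset.mem_filter _ _ (Classical.decPred _)]
  exact ⟨fun h => h.2, fun h => ⟨Finset.mem_univ p, h⟩⟩

lemma main [Nonempty X] : ∀ (N : ℕ) (q : X → Finset X → ℝ),
    (∀ (B : Finset X), ∀ y ∈ B, 0 ≤ q y B) →
    (∀ A : Finset X, A.Nonempty → A ≠ Finset.univ →
      ∑ x ∈ A, q x A = ∑ z ∈ Aᶜ, q z (insert z A)) →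
    (supp q).card ≤ N →
    ∃ ν : (X ≃ Fin (Fintype.card X)) → ℝ,
      (∀ σ, 0 ≤ ν σ) ∧ (∑ σ, ν σ = ∑ x, q x Finset.univ) ∧
      ∀ (B : Finset X), ∀ y ∈ B,
        q y B = ∑ σ ∈ Finset.univ.filter (fun σ => B = S σ y), ν σ := by
  intro N
  induction N using Nat.strong_induction_on with
  | _ N ihN =>
    intro q hnn hcons hcard
    by_cases hpos : 0 < ∑ x, q x Finset.univ
    · -- find a positive chain and peel it off
      obtain ⟨σ, hσ⟩ := exists_sigma q hnn hcons hpos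
      set t := Finset.univ.inf' Finset.univ_nonempty (fun y => q y (S σ y)) with ht
      have htpos : 0 < t := by
        rw [ht, Finset.lt_inf'_iff]
        intro y _
        exact hσ y
      have htle : ∀ y : X, t ≤ q y (S σ y) := fun y =>
        Finset.inf'_le _ (Finset.mem_univ y)
      obtain ⟨y₀, -, hy₀⟩ := Finset.exists_mem_eq_inf' Finset.univ_nonempty
        (fun y => q y (S σ y))
      set q' := fun (y : X) (B : Finset X) => q y B - (if B = S σ y then t else 0) with hq'
      have hnn' : ∀ (B : Finset X), ∀ y ∈ B, 0 ≤ q' y B := by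
        intro B y hy
        simp only [hq']
        by_cases hB : B = S σ y
        · rw [if_pos hB, hB]
          linarith [htle y]
        · rw [if_neg hB, sub_zero]
          exact hnn B y hy
      have hcons' : ∀ A : Finset X, A.Nonempty → A ≠ Finset.univ →
          ∑ x ∈ A, q' x A = ∑ z ∈ Aᶜ, q' z (insert z A) := by
        intro A hne hnu
        rw [hq']
        simp only
        rw [Finset.sum_sub_distrib, Finset.sum_sub_distrib, hcons A hne hnu,
          sum_out σ A t, sum_in σ hne hnu t]
      have hsupp : supp q' ⊆ supp q := by
        intro p hp
        rw [mem_supp] at hp ⊢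
        refine ⟨hp.1, fun h0 => hp.2 ?_⟩
        rw [hq']
        simp only
        by_cases hB : p.2 = S σ p.1
        · exact absurd (hB ▸ h0) (ne_of_gt (hσ p.1))
        · rw [if_neg hB, h0, sub_zero]
      have hy₀mem : (y₀, S σ y₀) ∈ supp q :=
        mem_supp.2 ⟨self_mem_S y₀, ne_of_gt (hσ y₀)⟩
      have hy₀not : (y₀, S σ y₀) ∉ supp q' := by
        rw [mem_supp]
        simp only [hq', if_pos rfl, not_and_or]
        right
        rw [not_ne_iff, ht, hy₀]
        simp
      have hlt : (supp q').card < (supp q).card :=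
        Finset.card_lt_card (Finset.ssubset_iff_of_subset hsupp |>.2 ⟨_, hy₀mem, hy₀not⟩)
      have hNpos : (supp q').card < N := lt_of_lt_of_le hlt hcard
      obtain ⟨ν', hν'nn, hν'sum, hν'dec⟩ := ihN (supp q').card hNpos q' hnn' hcons' le_rfl
      refine ⟨fun τ => ν' τ + (if τ = σ then t else 0), ?_, ?_, ?_⟩
      · intro τ
        by_cases hτ : τ = σ
        · simp only [if_pos hτ]
          linarith [hν'nn τ]
        · simp only [if_neg hτ, add_zero]
          exact hν'nn τ
      · rw [Finset.sum_add_distrib, hν'sum, Finset.sum_ite_eq' Finset.univ σ (fun _ => t),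
          if_pos (Finset.mem_univ σ)]
        have : ∑ x, q' x Finset.univ = ∑ x, q x Finset.univ - t := by
          rw [hq']
          simp only
          rw [Finset.sum_sub_distrib, sum_out_univ σ t]
        rw [this]
        ring
      · intro B y hy
        have h1 : q y B = q' y B + (if B = S σ y then t else 0) := by
          rw [hq']; ring
        rw [h1, hν'dec B y hy, Finset.sum_add_distrib]
        congr 1
        rw [Finset.sum_ite_eq' _ σ (fun _ => t)]
        by_cases hB : B = S σ y
        · rw [if_pos hB, if_pos (Finset.mem_filter.2 ⟨Finset.mem_univ σ, hB⟩)]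
        · rw [if_neg hB, if_neg (show σ ∉ Finset.univ.filter (fun τ : X ≃ Fin (Fintype.card X) => B = S τ y) from
            fun h => hB (Finset.mem_filter.1 h).2)]
    · -- zero flow
      have hzero : ∑ x, q x Finset.univ = 0 :=
        le_antisymm (not_lt.1 hpos)
          (Finset.sum_nonneg fun x _ => hnn Finset.univ x (Finset.mem_univ x))
      have hall := all_zero q hnn hcons hzero
      refine ⟨fun _ => 0, fun _ => le_rfl, ?_, ?_⟩
      · rw [hzero]; simp
      · intro B y hy
        rw [hall B y hy]
        simp

end Stmt18

/-- Flow decomposition on the Boolean lattice (Falmagne): nonnegative edge capacities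
`q(y,B)` (edge from `B` to `B \ {y}`) satisfying flow conservation at interior nodes and
unit outflow from `X` decompose as a mixture of unit flows along maximal chains,
bijectively encoded by linear orders `σ : X ≃ Fin |X|` (smaller rank removed first); the
chain of `σ` uses the edge `(y,B)` iff `B = {z : σ y ≤ σ z}`. -/
theorem stmt18 {X : Type*} [Fintype X] [DecidableEq X] [Nonempty X]
    (q : X → Finset X → ℝ)
    (hnn : ∀ (B : Finset X), ∀ y ∈ B, 0 ≤ q y B)
    (hcons : ∀ A : Finset X, A.Nonempty → A ≠ Finset.univ →
      ∑ x ∈ A, q x A = ∑ z ∈ Aᶜ, q z (insert z A))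
    (hout : ∑ x, q x Finset.univ = 1) :
    ∃ ν : (X ≃ Fin (Fintype.card X)) → ℝ,
      (∀ σ, 0 ≤ ν σ) ∧ (∑ σ, ν σ = 1) ∧
      ∀ (B : Finset X), ∀ y ∈ B,
        q y B =
          ∑ σ ∈ Finset.univ.filter
              (fun σ : X ≃ Fin (Fintype.card X) =>
                B = Finset.univ.filter (fun z => σ y ≤ σ z)),
            ν σ := by
  obtain ⟨ν, h1, h2, h3⟩ := Stmt18.main (Stmt18.supp q).card q hnn hcons le_rfl
  refine ⟨ν, h1, by rw [h2, hout], ?_⟩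
  intro B y hy
  exact h3 B y hy
end

section
/- Let p be a random choice rule on a finite set X (p(x,A) ≥ 0, Σ_{x∈A} p(x,A) = 1 for all nonempty A ⊆ X) with Möbius inverse q defined by p(x,A) = Σ_{A⊆A'} q(x,A'). Then for every A with ∅ ⊊ A ⊊ X: Σ_{x∈A} q(x,A) = Σ_{z∉A} q(z,A∪{z}). -/
open Finset

/-- The (one-period) Möbius inverse of a random choice rule. -/
noncomputable def mob1 {X : Type*} [Fintype X] [DecidableEq X]
    (p : X → Finset X → ℝ) (x : X) (A : Finset X) : ℝ :=
  ∑ A' ∈ Finset.univ.filter (fun A' => A ⊆ A'), (-1 : ℝ) ^ ((A' \ A).card) * p x A'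

lemma alt_sum_supersets {X : Type*} [Fintype X] [DecidableEq X]
    (A : Finset X) (hA : A ≠ Finset.univ) :
    ∑ A' ∈ Finset.univ.filter (fun A' => A ⊆ A'), (-1 : ℝ) ^ ((A' \ A).card) = 0 := by
  have h1 : ∑ A' ∈ Finset.univ.filter (fun A' => A ⊆ A'), (-1 : ℝ) ^ ((A' \ A).card)
      = ∑ B ∈ Aᶜ.powerset, (-1 : ℝ) ^ B.card := by
    refine Finset.sum_nbij' (fun A' => A' \ A) (fun B => A ∪ B) ?_ ?_ ?_ ?_ ?_
    · intro A' hA'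
      simp only [mem_filter, mem_univ, true_and] at hA'
      simp only [mem_powerset]
      intro x hx
      simp only [mem_sdiff] at hx
      simp [mem_compl, hx.2]
    · intro B hB
      simp [mem_filter]
    · intro A' hA'
      simp only [mem_filter, mem_univ, true_and] at hA'
      exact Finset.union_sdiff_of_subset hA'
    · intro B hB
      simp only [mem_powerset] at hB
      show (A ∪ B) \ A = B
      rw [Finset.union_sdiff_cancel_left]
      rw [Finset.disjoint_left]
      intro x hxA hxB
      exact absurd hxA (by simpa using hB hxB)
    · intros; rfl
  rw [h1]
  have h2 : Aᶜ.Nonempty := by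
    rw [← Finset.card_pos, Finset.card_compl]
    have h := Finset.card_lt_card (lt_of_le_of_ne (Finset.subset_univ A) hA)
    rw [Finset.card_univ] at h
    omega
  have h3 := Finset.sum_powerset_neg_one_pow_card_of_nonempty h2
  have h4 : ((∑ m ∈ Aᶜ.powerset, (-1 : ℤ) ^ m.card : ℤ) : ℝ) = 0 := by rw [h3]; norm_num
  push_cast at h4
  convert h4 using 2

/-- Inflow-equals-outflow (Falmagne 1978): for any random choice rule `p` with Möbius
inverse `q`, for every `∅ ⊊ A ⊊ X`, `Σ_{x∈A} q(x,A) = Σ_{z∉A} q(z,A∪{z})`. -/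
theorem stmt19 {X : Type*} [Fintype X] [DecidableEq X]
    (p : X → Finset X → ℝ)
    (hnn : ∀ (A : Finset X), ∀ x ∈ A, 0 ≤ p x A)
    (hsum : ∀ A : Finset X, A.Nonempty → ∑ x ∈ A, p x A = 1) :
    ∀ A : Finset X, A.Nonempty → A ≠ Finset.univ →
      ∑ x ∈ A, mob1 p x A = ∑ z ∈ Aᶜ, mob1 p z (insert z A) := by
  intro A hne hAne
  set S := Finset.univ.filter (fun A' => A ⊆ A') with hS
  have hL : ∑ x ∈ A, mob1 p x A
      = ∑ A' ∈ S, (-1 : ℝ) ^ ((A' \ A).card) * ∑ x ∈ A, p x A' := by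
    unfold mob1
    rw [Finset.sum_comm]
    exact Finset.sum_congr rfl (fun A' _ => by rw [Finset.mul_sum])
  have hR : ∑ z ∈ Aᶜ, mob1 p z (insert z A)
      = ∑ A' ∈ S, ∑ z ∈ A' \ A, (-1 : ℝ) ^ ((A' \ insert z A).card) * p z A' := by
    unfold mob1
    refine Finset.sum_comm' ?_
    intro z A'
    simp only [mem_compl, mem_filter, mem_univ, true_and, mem_sdiff, hS]
    constructor
    · rintro ⟨hz, hins⟩
      have hzA' : z ∈ A' := hins (mem_insert_self z A)
      have hAA' : A ⊆ A' := (Finset.insert_subset_iff.mp hins).2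
      exact ⟨⟨hzA', hz⟩, hAA'⟩
    · rintro ⟨⟨hzA', hz⟩, hAA'⟩
      exact ⟨hz, Finset.insert_subset hzA' hAA'⟩
  have hinner : ∀ A' ∈ S,
      ∑ z ∈ A' \ A, (-1 : ℝ) ^ ((A' \ insert z A).card) * p z A'
        = (-1 : ℝ) ^ ((A' \ A).card) * (∑ x ∈ A, p x A') - (-1 : ℝ) ^ ((A' \ A).card) := by
    intro A' hA'
    have hAA' : A ⊆ A' := by simpa [hS] using hA'
    have hstep : ∀ z ∈ A' \ A,
        (-1 : ℝ) ^ ((A' \ insert z A).card) * p z A'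
          = -((-1 : ℝ) ^ ((A' \ A).card) * p z A') := by
      intro z hz
      rw [mem_sdiff] at hz
      have h1 : A' \ insert z A = (A' \ A).erase z := by
        ext y; simp only [mem_sdiff, mem_insert, mem_erase]; tauto
      have h2 : ((A' \ A).erase z).card = (A' \ A).card - 1 :=
        Finset.card_erase_of_mem (by simp [mem_sdiff, hz.1, hz.2])
      have hpos : 1 ≤ (A' \ A).card := Finset.card_pos.mpr ⟨z, by simp [mem_sdiff, hz.1, hz.2]⟩
      rw [h1, h2]
      have h3 : (-1 : ℝ) ^ ((A' \ A).card) = (-1) ^ ((A' \ A).card - 1) * (-1) := by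
        rw [← pow_succ]; congr 1; omega
      rw [h3]; ring
    rw [Finset.sum_congr rfl hstep, Finset.sum_neg_distrib, ← Finset.mul_sum]
    have hsd : ∑ z ∈ A' \ A, p z A' = 1 - ∑ x ∈ A, p x A' := by
      have := Finset.sum_sdiff_eq_sub (f := fun z => p z A') hAA'
      rw [this, hsum A' (hne.mono hAA')]
    rw [hsd]; ring
  rw [hL, hR, Finset.sum_congr rfl hinner, Finset.sum_sub_distrib,
    alt_sum_supersets A hAne, sub_zero]
end
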